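/- Let $v_0 \in L^1_{loc}(\mathbb{R}^3)$ with $|v_0|^2$ locally integrable, and suppose $v_0$ is $\lambda$-discretely self-similar for some $\lambda > 1$, i.e., $v_0(x) = \lambda v_0(\lambda x)$ for a.e. $x$. If $\|v_0\|_{L^2_{uloc}} := \sup_{x\in\mathbb{R}^3}\|v_0\|_{L^2(B_1(x))} < \infty$, then $\sup_{x_0 \in \mathbb{R}^3,\, r>0} \frac{1}{r}\int_{B_r(x_0)}|v_0|^2\,dx \le \lambda\,\|v_0\|_{L^2_{uloc}}^2$. -/

import Mathlib

open MeasureTheory Metric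

abbrev E3 := EuclideanSpace ℝ (Fin 3)

theorem dss_morrey_bound (v₀ : E3 → E3) (l : ℝ) (hl : 1 < l)
    (hloc : ∀ (x : E3) (r : ℝ), IntegrableOn (fun y => ‖v₀ y‖^2) (ball x r))
    (hdss : ∀ᵐ x : E3, v₀ x = l • v₀ (l • x))
    (M : ℝ) (hM : ∀ x : E3, ∫ y in ball x 1, ‖v₀ y‖^2 ≤ M) :
    ∀ (x₀ : E3) (r : ℝ), 0 < r →
      (1/r) * ∫ y in ball x₀ r, ‖v₀ y‖^2 ≤ l * M := by
  have hl0 : (0:ℝ) < l := lt_trans one_pos hl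
  have hM0 : 0 ≤ M :=
    le_trans (setIntegral_nonneg measurableSet_ball (fun y _ => by positivity)) (hM 0)
  have hfin : Module.finrank ℝ E3 = 3 := by simp
  -- one step of scaling
  have step : ∀ (x : E3) (r : ℝ),
      (∫ y in ball (l • x) (l * r), ‖v₀ y‖^2) = l * ∫ y in ball x r, ‖v₀ y‖^2 := by
    intro x r
    have h1 : (∫ y in ball x r, ‖v₀ y‖^2) = ∫ y in ball x r, l^2 * ‖v₀ (l • y)‖^2 := by
      refine setIntegral_congr_ae measurableSet_ball ?_
      filter_upwards [hdss] with y hy _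
      rw [hy, norm_smul, Real.norm_eq_abs, abs_of_pos hl0, mul_pow]
    have h2 : (∫ y in ball x r, ‖v₀ (l • y)‖^2)
        = (l ^ 3)⁻¹ • ∫ y in ball (l • x) (l * r), ‖v₀ y‖^2 := by
      have := Measure.setIntegral_comp_smul_of_pos volume (fun y => ‖v₀ y‖^2) (ball x r) hl0
      rw [hfin] at this
      rw [this, smul_ball hl0.ne' x r, Real.norm_eq_abs, abs_of_pos hl0]
    rw [h1, integral_const_mul, h2, smul_eq_mul]
    field_simp
  -- iterated scaling for integer powers
  have key : ∀ (k : ℤ) (x : E3) (r : ℝ),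
      (∫ y in ball ((l ^ k) • x) (l ^ k * r), ‖v₀ y‖^2) = l ^ k * ∫ y in ball x r, ‖v₀ y‖^2 := by
    intro k
    induction k using Int.induction_on with
    | zero => intro x r; simp
    | succ k ih =>
      intro x r
      have e1 : (l : ℝ) ^ ((k : ℤ) + 1) = l * l ^ (k : ℤ) := by
        rw [zpow_add₀ hl0.ne', zpow_one]; ring
      have e2 : (l ^ ((k : ℤ) + 1)) • x = l • ((l ^ (k : ℤ)) • x) := by
        rw [e1, mul_smul]
      rw [e2, e1, mul_assoc, step, ih, mul_assoc]
    | pred k ih =>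
      intro x r
      have e1 : (l : ℝ) ^ (-(k : ℤ)) = l * l ^ (-(k : ℤ) - 1) := by
        have e0 : (l : ℝ) ^ (-(k:ℤ) - 1 + 1) = l ^ (-(k:ℤ) - 1) * l := zpow_add_one₀ hl0.ne' _
        have e0' : (-(k:ℤ) - 1 + 1) = -(k:ℤ) := by ring
        rw [e0'] at e0
        rw [e0]; ring
      have e2 : (l ^ (-(k : ℤ))) • x = l • ((l ^ (-(k : ℤ) - 1)) • x) := by
        rw [e1, mul_smul]
      have h := step ((l ^ (-(k : ℤ) - 1)) • x) (l ^ (-(k : ℤ) - 1) * r)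
      have h2 := ih x r
      rw [e2, e1, mul_assoc, h] at h2
      exact mul_left_cancel₀ hl0.ne' (h2.trans (by ring))
  intro x₀ r hr
  set a := Real.logb l r with ha
  set k : ℤ := ⌈a⌉ with hk
  have hk1 : r ≤ l ^ k := by
    have : a ≤ (k : ℝ) := Int.le_ceil a
    have := (Real.logb_le_iff_le_rpow hl hr).mp this
    rwa [Real.rpow_intCast] at this
  have hk2 : l ^ k ≤ l * r := by
    have h1 : (k : ℝ) - 1 < a := by
      have := Int.ceil_lt_add_one a
      linarith
    have h2 : l ^ ((k : ℝ) - 1) < r := (Real.lt_logb_iff_rpow_lt hl hr).mp h1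
    have h3 : l ^ ((k : ℝ) - 1) = l ^ k / l := by
      rw [Real.rpow_sub hl0, Real.rpow_one, Real.rpow_intCast]
    rw [h3, div_lt_iff₀ hl0] at h2
    nlinarith
  have hlk : (0:ℝ) < l ^ k := zpow_pos hl0 _
  set x : E3 := (l ^ (-k)) • x₀ with hx
  set ρ : ℝ := l ^ (-k) * r with hρ
  have hxx : (l ^ k) • x = x₀ := by
    rw [hx, smul_smul, ← zpow_add₀ hl0.ne']
    simp
  have hrr : l ^ k * ρ = r := by
    rw [hρ, ← mul_assoc, ← zpow_add₀ hl0.ne']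
    simp
  have hkey := key k x ρ
  rw [hxx, hrr] at hkey
  have hρ1 : ρ ≤ 1 := by
    rw [hρ]
    have : l ^ (-k) = (l ^ k)⁻¹ := by rw [zpow_neg]
    rw [this]
    rw [inv_mul_le_iff₀ hlk, mul_one]
    exact hk1
  have hmono : (∫ y in ball x ρ, ‖v₀ y‖^2) ≤ ∫ y in ball x 1, ‖v₀ y‖^2 := by
    refine setIntegral_mono_set (hloc x 1) ?_ (HasSubset.Subset.eventuallyLE (ball_subset_ball hρ1))
    filter_upwards with y using by positivity
  have hJ : (∫ y in ball x ρ, ‖v₀ y‖^2) ≤ M := le_trans hmono (hM x)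
  rw [hkey]
  have h1 : (1/r) * (l ^ k * ∫ y in ball x ρ, ‖v₀ y‖^2) ≤ (1/r) * (l ^ k * M) := by
    have : (0:ℝ) ≤ (1/r) * l ^ k := by positivity
    calc (1/r) * (l ^ k * ∫ y in ball x ρ, ‖v₀ y‖^2)
        = ((1/r) * l ^ k) * ∫ y in ball x ρ, ‖v₀ y‖^2 := by ring
      _ ≤ ((1/r) * l ^ k) * M := by exact mul_le_mul_of_nonneg_left hJ this
      _ = (1/r) * (l ^ k * M) := by ring
  refine le_trans h1 ?_
  rw [one_div, inv_mul_le_iff₀ hr]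
  calc l ^ k * M ≤ (l * r) * M := mul_le_mul_of_nonneg_right hk2 hM0
    _ = r * (l * M) := by ring
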